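/- arXiv:1806.04405 — 2 statements merged into one kernel-verified Lean document; each statement's English description precedes it below -/
import Mathlib

section
/- Let A ⊆ B be an extension of integral domains with A integrally closed (normal) and B integral over A. Then the inclusion A → B satisfies the going-down property. -/
open Polynomial


theorem exists_monic_coeff_mem_of_mem_map {A B : Type} [CommRing A] [CommRing B] [Algebra A B]
    [Algebra.IsIntegral A B] (I : Ideal A) {y : B} (hy : y ∈ I.map (algebraMap A B)) :
    ∃ g : A[X], g.Monic ∧ (∀ k < g.natDegree, g.coeff k ∈ I) ∧ Polynomial.aeval y g = 0 := by
  classical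
  have hy' : y ∈ Submodule.span B ((algebraMap A B) '' I) := hy
  obtain ⟨c, hc, hrep⟩ := Submodule.mem_span_set.mp hy'
  choose pre hpre1 hpre2 using fun z (hz : z ∈ c.support) => (hc hz : z ∈ (algebraMap A B) '' I)
  -- the subalgebra
  set s : Set B := insert y (↑(c.support.image fun z => c z) : Set B) with hs
  have hsfin : s.Finite := Set.Finite.insert _ (Finset.finite_toSet _)
  have hint : ∀ x ∈ s, IsIntegral A x := fun x _ => Algebra.IsIntegral.isIntegral x
  set M := Algebra.adjoin A s with hM
  have hfg : M.toSubmodule.FG := fg_adjoin_of_finite hsfin hint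
  haveI h1 : Module.Finite A ↥(Subalgebra.toSubmodule M) := Module.Finite.iff_fg.mpr hfg
  haveI : Module.Finite A ↥M := h1
  have hyM : y ∈ M := Algebra.subset_adjoin (Set.mem_insert _ _)
  have hcM : ∀ z ∈ c.support, c z ∈ M := fun z hz =>
    Algebra.subset_adjoin (Set.mem_insert_iff.mpr (Or.inr (by
      simp only [Finset.coe_image, Set.mem_image, Finset.mem_coe]
      exact ⟨z, hz, rfl⟩)))
  set yM : ↥M := ⟨y, hyM⟩ with hyMdef
  set f : Module.End A ↥M := (Algebra.lmul A ↥M) yM with hf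
  have hrange : LinearMap.range f ≤ I • (⊤ : Submodule A ↥M) := by
    rintro _ ⟨m, rfl⟩
    have : f m = ∑ z ∈ c.support.attach, (pre z z.2) •
        (⟨c z * (m : B), M.mul_mem (hcM z z.2) m.2⟩ : ↥M) := by
      apply Subtype.ext
      push_cast [hf]
      show y * (m : B) = _
      calc y * (m : B) = (∑ z ∈ c.support, c z • z) * (m : B) := by
            rw [← hrep, Finsupp.sum]
        _ = ∑ z ∈ c.support.attach, (c z * z) * (m : B) := by
            rw [Finset.sum_mul, ← Finset.sum_attach c.support fun z => (c z • z) * (m:B)]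
            simp [smul_eq_mul]
        _ = _ := by
            refine Finset.sum_congr rfl fun z _ => ?_
            rw [Algebra.smul_def, hpre2]; ring
    rw [this]
    exact Submodule.sum_mem _ fun z _ =>
      Submodule.smul_mem_smul (hpre1 z z.2) Submodule.mem_top
  obtain ⟨g, hgm, -, hgc, hg0⟩ :=
    LinearMap.exists_monic_and_coeff_mem_pow_and_aeval_eq_zero_of_range_le_smul A f I hrange
  refine ⟨g, hgm, fun k hk => ?_, ?_⟩
  · exact Ideal.pow_le_self (Nat.sub_ne_zero_of_lt hk) (hgc k)
  · have h1 : Polynomial.aeval f g = (Algebra.lmul A ↥M) (Polynomial.aeval yM g) := by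
      rw [hf, Polynomial.aeval_algHom_apply]
    have h2 : Polynomial.aeval yM g = 0 := by
      have h := congrArg (fun (e : Module.End A ↥M) => e 1) (h1 ▸ hg0)
      have h2 : Polynomial.aeval yM g * 1 = 0 := h
      rwa [mul_one] at h2
    have h3 : (Polynomial.aeval yM g : B) = Polynomial.aeval y g :=
      Polynomial.aeval_subalgebra_coe g M yM
    rw [h2] at h3
    simpa using h3.symm


theorem coeff_mem_of_monic_of_map_dvd_X_pow {A : Type} [CommRing A] (p' : Ideal A) [p'.IsPrime]
    {g : A[X]} (hg : g.Monic) {n : ℕ} (hdvd : g.map (Ideal.Quotient.mk p') ∣ X ^ n) :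
    ∀ k < g.natDegree, g.coeff k ∈ p' := by
  obtain ⟨i, hi, hassoc⟩ := (dvd_prime_pow Polynomial.prime_X n).mp hdvd
  have heq : g.map (Ideal.Quotient.mk p') = X ^ i :=
    Polynomial.eq_of_monic_of_associated (hg.map _) (monic_X_pow i) hassoc
  have hdeg : g.natDegree = i := by
    have := congrArg Polynomial.natDegree heq
    rwa [hg.natDegree_map, natDegree_X_pow] at this
  intro k hk
  have hco := congrArg (fun q => Polynomial.coeff q k) heq
  simp only [coeff_map, coeff_X_pow] at hco
  rw [if_neg (by omega)] at hco
  exact Ideal.Quotient.eq_zero_iff_mem.mp hco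

/-- Key step for going down: if `a * b ∈ p'B` with `a ∉ p'`, then all lower coefficients of the
minimal polynomial of `b` lie in `p'`. -/
theorem key_coeff_mem {A B : Type} [CommRing A] [CommRing B] [IsDomain A] [IsDomain B] [Algebra A B]
    (hinj : Function.Injective (algebraMap A B)) [IsIntegrallyClosed A] [Algebra.IsIntegral A B]
    (p' : Ideal A) [p'.IsPrime] {a : A} (ha : a ∉ p') {b : B}
    (hy : algebraMap A B a * b ∈ p'.map (algebraMap A B)) :
    ∀ k < (minpoly A b).natDegree, (minpoly A b).coeff k ∈ p' := by
  haveI : Module.IsTorsionFree A B := Module.isTorsionFree_iff_algebraMap_injective.mpr hinj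
  set y := algebraMap A B a * b with hydef
  have hyint : IsIntegral A y := Algebra.IsIntegral.isIntegral y
  have hbint : IsIntegral A b := Algebra.IsIntegral.isIntegral b
  have ha0 : a ≠ 0 := fun h => ha (h ▸ p'.zero_mem)
  obtain ⟨g₀, hg₀m, hg₀c, hg₀0⟩ := exists_monic_coeff_mem_of_mem_map p' hy
  set g := minpoly A y with hgdef
  have hgm : Monic g := minpoly.monic hyint
  have hgdvd : g ∣ g₀ := minpoly.isIntegrallyClosed_dvd hyint hg₀0
  have hmap : g₀.map (Ideal.Quotient.mk p') = X ^ g₀.natDegree := by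
    ext k
    rw [coeff_map, coeff_X_pow]
    rcases lt_trichotomy k g₀.natDegree with h | h | h
    · rw [if_neg h.ne, Ideal.Quotient.eq_zero_iff_mem]; exact hg₀c k h
    · rw [if_pos h, h, hg₀m.coeff_natDegree, map_one]
    · rw [if_neg h.ne', coeff_eq_zero_of_natDegree_lt h, map_zero]
  have hgc : ∀ k < g.natDegree, g.coeff k ∈ p' :=
    coeff_mem_of_monic_of_map_dvd_X_pow p' hgm (hmap ▸ Polynomial.map_dvd _ hgdvd)
  set m := minpoly A b with hmdef
  have hmm : Monic m := minpoly.monic hbint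
  have hann : Polynomial.aeval y (m.scaleRoots a) = 0 :=
    Polynomial.scaleRoots_aeval_eq_zero (minpoly.aeval A b)
  have hdvd2 : g ∣ m.scaleRoots a := minpoly.isIntegrallyClosed_dvd hyint hann
  have hsm : (m.scaleRoots a).Monic := (Polynomial.monic_scaleRoots_iff a).mpr hmm
  have hle1 : g.natDegree ≤ m.natDegree := by
    have h := Polynomial.natDegree_le_of_dvd hdvd2 hsm.ne_zero
    rwa [Polynomial.natDegree_scaleRoots] at h
  have hle2 : m.natDegree ≤ g.natDegree := by
    let K := FractionRing A
    let L := FractionRing B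
    letI : Algebra K L := FractionRing.liftAlgebra A L
    haveI : IsScalarTower A K L := FractionRing.isScalarTower_liftAlgebra A L
    have hKinj := IsFractionRing.injective A K
    have haK : algebraMap A K a ≠ 0 := fun h => ha0 (hKinj (by rw [h, map_zero]))
    have e1 : minpoly K (algebraMap B L b) = m.map (algebraMap A K) :=
      minpoly.isIntegrallyClosed_eq_field_fractions K L hbint
    have e2 : minpoly K (algebraMap B L y) = g.map (algebraMap A K) :=
      minpoly.isIntegrallyClosed_eq_field_fractions K L hyint
    have hyL : algebraMap K L ((algebraMap A K a)⁻¹) * algebraMap B L y = algebraMap B L b := by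
      rw [hydef, map_mul, ← IsScalarTower.algebraMap_apply A B L,
        IsScalarTower.algebraMap_apply A K L, ← mul_assoc, ← map_mul,
        inv_mul_cancel₀ haK, map_one, one_mul]
    have hroot : Polynomial.aeval (algebraMap B L b)
        ((g.map (algebraMap A K)).scaleRoots ((algebraMap A K a)⁻¹)) = 0 := by
      rw [← hyL]
      exact Polynomial.scaleRoots_aeval_eq_zero (by rw [← e2]; exact minpoly.aeval K _)
    have hd := Polynomial.natDegree_le_of_dvd (minpoly.dvd K _ hroot)
      (((Polynomial.monic_scaleRoots_iff _).mpr (hgm.map _)).ne_zero)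
    rw [Polynomial.natDegree_scaleRoots, e1] at hd
    rwa [hmm.natDegree_map, hgm.natDegree_map] at hd
  have heq : g = m.scaleRoots a :=
    Polynomial.eq_of_dvd_of_natDegree_le_of_leadingCoeff hdvd2
      (by rw [Polynomial.natDegree_scaleRoots]; exact hle2)
      (by rw [hgm.leadingCoeff, hsm.leadingCoeff])
  intro k hk
  have hck : m.coeff k * a ^ (m.natDegree - k) ∈ p' := by
    have := hgc k (by omega)
    rwa [heq, Polynomial.coeff_scaleRoots] at this
  rcases (Ideal.IsPrime.mem_or_mem ‹p'.IsPrime› hck) with h | h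
  · exact h
  · exact absurd (Ideal.IsPrime.mem_of_pow_mem ‹p'.IsPrime› _ h) ha

/-- A ring homomorphism `f : A → B` has the going-down property. -/
def RingHom.GoingDown {A B : Type} [CommRing A] [CommRing B] (f : A →+* B) : Prop :=
  ∀ (p' p : Ideal A), p'.IsPrime → p.IsPrime → p' < p →
    ∀ P : Ideal B, P.IsPrime → P.comap f = p →
      ∃ P' : Ideal B, P'.IsPrime ∧ P' < P ∧ P'.comap f = p'

/-- If `A ⊆ B` is an extension of domains with `A` integrally closed and
`B` integral over `A`, then `A → B` satisfies going-down. -/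
theorem goingDown_of_integral_of_integrallyClosed (A B : Type) [CommRing A] [CommRing B]
    [IsDomain A] [IsDomain B] [Algebra A B] (hinj : Function.Injective (algebraMap A B))
    [IsIntegrallyClosed A] [Algebra.IsIntegral A B] :
    (algebraMap A B).GoingDown := by
  intro p' p hp' hp hlt P hP hPc
  haveI := hp'; haveI := hp; haveI := hP
  set f := algebraMap A B with hfdef
  -- the submonoid of products a * b with a ∉ p', b ∉ P
  set T : Submonoid B :=
    { carrier := {x | ∃ a ∉ p', ∃ b ∉ P, x = f a * b}
      mul_mem' := by
        rintro x y ⟨a₁, ha₁, b₁, hb₁, rfl⟩ ⟨a₂, ha₂, b₂, hb₂, rfl⟩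
        refine ⟨a₁ * a₂, fun h => ?_, b₁ * b₂, fun h => ?_, by push_cast [map_mul]; ring⟩
        · rcases hp'.mem_or_mem h with h | h
          exacts [ha₁ h, ha₂ h]
        · rcases hP.mem_or_mem h with h | h
          exacts [hb₁ h, hb₂ h]
      one_mem' := ⟨1, fun h => hp'.ne_top ((Ideal.eq_top_iff_one _).mpr h), 1,
        fun h => hP.ne_top ((Ideal.eq_top_iff_one _).mpr h), by simp⟩ } with hT
  have hone_p' : (1 : A) ∉ p' := fun h => hp'.ne_top ((Ideal.eq_top_iff_one _).mpr h)
  have hone_P : (1 : B) ∉ P := fun h => hP.ne_top ((Ideal.eq_top_iff_one _).mpr h)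
  have hdisj : Disjoint (↑(p'.map f) : Set B) (T : Set B) := by
    rw [Set.disjoint_left]
    rintro y hy ⟨a, ha, b, hb, rfl⟩
    -- derive b ∈ P from the key lemma
    have hco := key_coeff_mem hinj p' ha hy
    set m := minpoly A b with hm
    have hbint : IsIntegral A b := Algebra.IsIntegral.isIntegral b
    have hmm : m.Monic := minpoly.monic hbint
    have hdeg : 0 < m.natDegree := minpoly.natDegree_pos hbint
    have haev : Polynomial.aeval b m = 0 := minpoly.aeval A b
    have hsum : (Polynomial.aeval b m : B)
        = b ^ m.natDegree + ∑ k ∈ Finset.range m.natDegree, f (m.coeff k) * b ^ k := by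
      rw [Polynomial.aeval_eq_sum_range, Finset.sum_range_succ, hmm.coeff_natDegree]
      simp only [Algebra.smul_def, map_one, one_mul]
      ring
    have hpow : b ^ m.natDegree ∈ P := by
      have : b ^ m.natDegree = -∑ k ∈ Finset.range m.natDegree, f (m.coeff k) * b ^ k := by
        rw [haev] at hsum; linear_combination -hsum
      rw [this]
      refine neg_mem (Ideal.sum_mem _ fun k hk => Ideal.mul_mem_right _ _ ?_)
      have h1 : m.coeff k ∈ p' := hco k (Finset.mem_range.mp hk)
      have hmem : m.coeff k ∈ p := le_of_lt hlt h1
      rw [← hPc] at hmem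
      exact hmem
    exact hb (hP.mem_of_pow_mem _ hpow)
  obtain ⟨P', hP'prime, hle, hdisj'⟩ := Ideal.exists_le_prime_disjoint _ T hdisj
  have hcom : P'.comap f = p' := by
    apply le_antisymm
    · intro a haP'
      by_contra ha
      exact Set.disjoint_left.mp hdisj' haP' ⟨a, ha, 1, hone_P, (mul_one _).symm⟩
    · intro a ha
      exact hle (Ideal.mem_map_of_mem f ha)
  refine ⟨P', hP'prime, ?_, hcom⟩
  have hle' : P' ≤ P := by
    intro x hx
    by_contra hxP
    exact Set.disjoint_left.mp hdisj' hx ⟨1, hone_p', x, hxP, by simp⟩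
  refine lt_of_le_of_ne hle' ?_
  rintro rfl
  rw [hcom] at hPc
  exact hlt.ne hPc
end

section
/- Let R = k[x₀,x₁,x₂,x₃] over an algebraically closed field k, I = (x₀,x₁) ∩ (x₂,x₃), and J = (x₀x₃ − x₁x₂, x₁³ − x₀²x₂, x₀x₂² − x₁²x₃, x₂³ − x₁x₃²). Then I ∩ J = (x₀x₃ − x₁x₂, x₀x₂² − x₁²x₃), which is generated by a regular sequence of length 2 (a complete intersection). -/
open MvPolynomial
open scoped Pointwise

namespace SkewAux

variable {k : Type} [Field k]

local notation "R4" => MvPolynomial (Fin 4) k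

/-- generic: if each `X i - ν i` lies in `span S`, then `p - aeval ν p ∈ span S`. -/
lemma sub_aeval_mem (ν : Fin 4 → R4) (S : Set R4)
    (hν : ∀ i, X i - ν i ∈ Ideal.span S) (p : R4) :
    p - aeval ν p ∈ Ideal.span S := by
  induction p using MvPolynomial.induction_on with
  | C a => simp [aeval_C, algebraMap_eq]
  | add p q hp hq =>
      have : p + q - aeval ν (p + q) = (p - aeval ν p) + (q - aeval ν q) := by
        rw [map_add]; ring
      rw [this]; exact Ideal.add_mem _ hp hq
  | mul_X p i hp =>
      have : p * X i - aeval ν (p * X i)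
          = (p - aeval ν p) * X i + aeval ν p * (X i - ν i) := by
        rw [map_mul, aeval_X]; ring
      rw [this]
      exact Ideal.add_mem _ (Ideal.mul_mem_right _ _ hp) (Ideal.mul_mem_left _ _ (hν i))

lemma aeval_eq_zero_of_mem (ν : Fin 4 → R4) (S : Set R4)
    (hν : ∀ x ∈ S, aeval ν x = 0) {p : R4} (hp : p ∈ Ideal.span S) :
    aeval ν p = 0 := by
  have : Ideal.span S ≤ RingHom.ker (aeval ν : R4 →ₐ[k] R4) :=
    Ideal.span_le.mpr fun x hx => by simpa [RingHom.mem_ker] using hν x hx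
  simpa [RingHom.mem_ker] using this hp

lemma aeval_aeval (ν : Fin 4 → R4) (S : Set R4)
    (hν1 : ∀ i, X i - ν i ∈ Ideal.span S) (hν2 : ∀ x ∈ S, aeval ν x = 0) (p : R4) :
    aeval ν (aeval ν p) = aeval ν p := by
  have h := aeval_eq_zero_of_mem ν S hν2 (sub_aeval_mem ν S hν1 p)
  rw [map_sub] at h
  exact (sub_eq_zero.mp h).symm

/-- x₃-freeness predicate is preserved by multiplying with `X i`, `i ≠ 3`. -/
lemma prop_mul_X {r : R4} {i : Fin 4} (hi : i ≠ 3)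
    (hr : ∀ m : Fin 4 →₀ ℕ, m 3 ≠ 0 → coeff m r = 0) :
    ∀ m : Fin 4 →₀ ℕ, m 3 ≠ 0 → coeff m (r * X i) = 0 := by
  intro m hm
  rw [coeff_mul_X']
  split
  · apply hr
    rw [Finsupp.tsub_apply, Finsupp.single_apply, if_neg hi]
    simpa using hm
  · rfl

lemma prop_mul_X0_pow {r : R4}
    (hr : ∀ m : Fin 4 →₀ ℕ, m 3 ≠ 0 → coeff m r = 0) (n : ℕ) :
    ∀ m : Fin 4 →₀ ℕ, m 3 ≠ 0 → coeff m (r * X 0 ^ n) = 0 := by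
  induction n with
  | zero => simpa using hr
  | succ n ih =>
      have : r * X 0 ^ (n + 1) = (r * X 0 ^ n) * X (0 : Fin 4) := by ring
      rw [this]
      exact prop_mul_X (by decide) ih

/-- elimination of `x₃` modulo `f = x₀x₃ - x₁x₂`, at the cost of a power of `x₀`. -/
lemma elim_x3 (h : R4) :
    ∃ (N : ℕ) (q r : R4), X 0 ^ N * h = q * (X 0 * X 3 - X 1 * X 2) + r ∧
      ∀ m : Fin 4 →₀ ℕ, m 3 ≠ 0 → coeff m r = 0 := by
  induction h using MvPolynomial.induction_on with
  | C a =>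
      refine ⟨0, 0, C a, by ring, fun m hm => ?_⟩
      rw [coeff_C, if_neg]
      intro h0
      exact hm (by rw [← h0]; rfl)
  | add p q hp hq =>
      obtain ⟨Np, qp, rp, hid1, hr1⟩ := hp
      obtain ⟨Nq, qq, rq, hid2, hr2⟩ := hq
      refine ⟨Np + Nq, qp * X 0 ^ Nq + qq * X 0 ^ Np, rp * X 0 ^ Nq + rq * X 0 ^ Np,
        ?_, fun m hm => ?_⟩
      · rw [pow_add]
        linear_combination X 0 ^ Nq * hid1 + X 0 ^ Np * hid2
      · rw [coeff_add, prop_mul_X0_pow hr1 _ m hm, prop_mul_X0_pow hr2 _ m hm, add_zero]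
  | mul_X p i hp =>
      obtain ⟨N, q, r, hid, hr⟩ := hp
      by_cases hi : i = 3
      · subst hi
        refine ⟨N + 1, q * (X 0 * X 3 - X 1 * X 2) + r + X 1 * X 2 * q,
          r * X 1 * X 2, ?_, fun m hm => ?_⟩
        · linear_combination (X 0 * X 3) * hid
        · exact prop_mul_X (by decide) (prop_mul_X (by decide) hr) m hm
      · exact ⟨N, q * X i, r * X i, by linear_combination X i * hid,
          prop_mul_X hi hr⟩

/-- the toric map witnessing primality of the quadric cone. -/
noncomputable def psi : MvPolynomial (Fin 4) k →ₐ[k] MvPolynomial (Fin 3) k :=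
  aeval ![X 0, X 0 * X 1, X 2, X 1 * X 2]

/-- exponent transform -/
noncomputable def eexp (m : Fin 4 →₀ ℕ) : Fin 3 →₀ ℕ :=
  Finsupp.single 0 (m 0 + m 1) + Finsupp.single 1 (m 1) + Finsupp.single 2 (m 2)

lemma eexp_inj {m m' : Fin 4 →₀ ℕ} (h3 : m 3 = 0) (h3' : m' 3 = 0)
    (he : eexp m = eexp m') : m = m' := by
  have h0 := congrArg (fun F => F (0 : Fin 3)) he
  have h1 := congrArg (fun F => F (1 : Fin 3)) he
  have h2 := congrArg (fun F => F (2 : Fin 3)) he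
  simp [eexp, Finsupp.single_apply] at h0 h1 h2
  ext i
  fin_cases i <;> simp_all <;> omega

lemma psi_monomial (m : Fin 4 →₀ ℕ) (c : k) (h3 : m 3 = 0) :
    psi (monomial m c) = monomial (eexp m) c := by
  have hm : (monomial m c : MvPolynomial (Fin 4) k)
      = C c * X 0 ^ m 0 * X 1 ^ m 1 * X 2 ^ m 2 * X 3 ^ m 3 := by
    rw [monomial_eq]
    rw [Finsupp.prod_fintype _ _ (fun i => pow_zero _), Fin.prod_univ_four]
    ring
  have hm' : (monomial (eexp m) c : MvPolynomial (Fin 3) k)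
      = C c * X 0 ^ (eexp m 0) * X 1 ^ (eexp m 1) * X 2 ^ (eexp m 2) := by
    rw [monomial_eq]
    rw [Finsupp.prod_fintype _ _ (fun i => pow_zero _), Fin.prod_univ_three]
    ring
  have e0 : eexp m 0 = m 0 + m 1 := by simp [eexp, Finsupp.single_apply]
  have e1 : eexp m 1 = m 1 := by simp [eexp, Finsupp.single_apply]
  have e2 : eexp m 2 = m 2 := by simp [eexp, Finsupp.single_apply]
  rw [hm, hm', e0, e1, e2, h3]
  simp only [psi, map_mul, map_pow, aeval_X, aeval_C]
  norm_num [Matrix.cons_val_zero, Matrix.cons_val_one, Matrix.cons_val_two, Matrix.cons_val_three]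
  ring

lemma psi_inj_of_x3_free (r : MvPolynomial (Fin 4) k)
    (hr : ∀ m : Fin 4 →₀ ℕ, m 3 ≠ 0 → coeff m r = 0)
    (h0 : psi r = 0) : r = 0 := by
  have hsupp : ∀ m ∈ r.support, m 3 = 0 := by
    intro m hm
    by_contra hne
    exact (mem_support_iff.mp hm) (hr m hne)
  have hexp : psi r = ∑ m ∈ r.support, monomial (eexp m) (coeff m r) := by
    conv_lhs => rw [r.as_sum]
    rw [map_sum]
    exact Finset.sum_congr rfl fun m hm => psi_monomial m _ (hsupp m hm)
  apply MvPolynomial.ext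
  intro m
  rw [coeff_zero]
  by_cases h3 : m 3 = 0
  · have hc : coeff (eexp m) (psi r) = coeff m r := by
      rw [hexp, coeff_sum]
      by_cases hm : m ∈ r.support
      · rw [Finset.sum_eq_single_of_mem m hm]
        · rw [coeff_monomial, if_pos rfl]
        · intro b hb hbm
          rw [coeff_monomial, if_neg]
          intro hbe
          exact hbm (eexp_inj (hsupp b hb) h3 hbe)
      · rw [notMem_support_iff.mp hm, Finset.sum_eq_zero]
        intro b hb
        rw [coeff_monomial, if_neg]
        intro hbe
        exact hm (eexp_inj (hsupp b hb) h3 hbe ▸ hb)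
    rw [← hc, h0, coeff_zero]
  · exact hr m h3

lemma psi_f : psi (X 0 * X 3 - X 1 * X 2 : MvPolynomial (Fin 4) k) = 0 := by
  simp only [psi, map_sub, map_mul, aeval_X]
  norm_num [Matrix.cons_val_zero, Matrix.cons_val_one, Matrix.cons_val_two, Matrix.cons_val_three]
  ring

lemma psi_g : psi (X 0 * X 2 ^ 2 - X 1 ^ 2 * X 3 : MvPolynomial (Fin 4) k) ≠ 0 := by
  intro h
  have := congrArg (eval (![1, 0, 1] : Fin 3 → k)) h
  simp only [psi, map_sub, map_mul, map_pow, aeval_X] at this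
  norm_num [Matrix.cons_val_zero, Matrix.cons_val_one, Matrix.cons_val_two, Matrix.cons_val_three] at this

lemma x0_cancel {h : MvPolynomial (Fin 4) k}
    (hm : X 0 * h ∈ Ideal.span {(X 0 * X 3 - X 1 * X 2 : MvPolynomial (Fin 4) k)}) :
    h ∈ Ideal.span {(X 0 * X 3 - X 1 * X 2 : MvPolynomial (Fin 4) k)} := by
  obtain ⟨a, ha⟩ := Ideal.mem_span_singleton'.mp hm
  set ν : Fin 4 → MvPolynomial (Fin 4) k := ![0, X 1, X 2, X 3] with hν
  have hker : ∀ x ∈ ({X 0} : Set (MvPolynomial (Fin 4) k)), aeval ν x = 0 := by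
    intro x hx
    rw [Set.mem_singleton_iff.mp hx, aeval_X]
    simp [hν]
  have hgen : ∀ i, X i - ν i ∈ Ideal.span ({X 0} : Set (MvPolynomial (Fin 4) k)) := by
    intro i
    fin_cases i <;> simp [hν] <;>
      exact Ideal.subset_span rfl
  have h2 := congrArg (aeval ν) ha
  rw [map_mul, map_mul, map_sub, map_mul, map_mul] at h2
  simp only [aeval_X] at h2
  have hν0 : ν 0 = 0 := by simp [hν]
  have hν1 : ν 1 = X 1 := by simp [hν]
  have hν2 : ν 2 = X 2 := by simp [hν]
  have hν3 : ν 3 = X 3 := by simp [hν]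
  rw [hν0, hν1, hν2, hν3] at h2
  -- h2 : aeval ν a * (0 * X 3 - X 1 * X 2) = 0 * aeval ν h
  have ha0 : aeval ν a = 0 := by
    have h3 : aeval ν a * (X 1 * X 2) = 0 := by linear_combination -h2
    rcases mul_eq_zero.mp h3 with h4 | h4
    · exact h4
    · exact absurd h4 (mul_ne_zero (X_ne_zero _) (X_ne_zero _))
  have : a - aeval ν a ∈ Ideal.span ({X 0} : Set (MvPolynomial (Fin 4) k)) :=
    sub_aeval_mem ν _ hgen a
  rw [ha0, sub_zero] at this
  obtain ⟨w, hw⟩ := Ideal.mem_span_singleton'.mp this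
  refine Ideal.mem_span_singleton'.mpr ⟨w, ?_⟩
  have hX0 : (X 0 : MvPolynomial (Fin 4) k) ≠ 0 := X_ne_zero _
  apply mul_left_cancel₀ hX0
  linear_combination ha + (X 0 * X 3 - X 1 * X 2) * hw

lemma x0_pow_cancel {h : MvPolynomial (Fin 4) k} (N : ℕ)
    (hm : X 0 ^ N * h ∈ Ideal.span {(X 0 * X 3 - X 1 * X 2 : MvPolynomial (Fin 4) k)}) :
    h ∈ Ideal.span {(X 0 * X 3 - X 1 * X 2 : MvPolynomial (Fin 4) k)} := by
  induction N with
  | zero => simpa using hm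
  | succ n ih =>
      apply ih
      apply x0_cancel
      have : X 0 * (X 0 ^ n * h) = X 0 ^ (n + 1) * h := by ring
      rw [this]
      exact hm

/-- `g` is a nonzerodivisor modulo `(f)`. -/
lemma g_regular_mod_f {h : MvPolynomial (Fin 4) k}
    (hm : (X 0 * X 2 ^ 2 - X 1 ^ 2 * X 3) * h ∈
      Ideal.span {(X 0 * X 3 - X 1 * X 2 : MvPolynomial (Fin 4) k)}) :
    h ∈ Ideal.span {(X 0 * X 3 - X 1 * X 2 : MvPolynomial (Fin 4) k)} := by
  obtain ⟨w, hw⟩ := Ideal.mem_span_singleton'.mp hm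
  obtain ⟨N, q, r, hid, hr⟩ := elim_x3 h
  -- (g) * r = (X0^N * w - g*q) * f
  have key : (X 0 * X 2 ^ 2 - X 1 ^ 2 * X 3) * r
      = (X 0 ^ N * w - (X 0 * X 2 ^ 2 - X 1 ^ 2 * X 3) * q) * (X 0 * X 3 - X 1 * X 2) := by
    linear_combination (-(X 0 * X 2 ^ 2 - X 1 ^ 2 * X 3)) * hid - X 0 ^ N * hw
  have hpsi : psi (X 0 * X 2 ^ 2 - X 1 ^ 2 * X 3 : MvPolynomial (Fin 4) k) * psi r = 0 := by
    rw [← map_mul, key, map_mul, psi_f, mul_zero]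
  have hr0 : r = 0 := by
    rcases mul_eq_zero.mp hpsi with h0 | h0
    · exact absurd h0 psi_g
    · exact psi_inj_of_x3_free r hr h0
  apply x0_pow_cancel N
  rw [hid, hr0, add_zero]
  exact Ideal.mem_span_singleton'.mpr ⟨q, rfl⟩

lemma smul_top_f (f : MvPolynomial (Fin 4) k) :
    (f • (⊤ : Submodule (MvPolynomial (Fin 4) k) (MvPolynomial (Fin 4) k)))
      = Ideal.span {f} := by
  rw [← Submodule.ideal_span_singleton_smul, smul_eq_mul, Ideal.mul_top]

lemma reg_seq :
    RingTheory.Sequence.IsRegular (MvPolynomial (Fin 4) k)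
      [(X 0 * X 3 - X 1 * X 2 : MvPolynomial (Fin 4) k),
        X 0 * X 2 ^ 2 - X 1 ^ 2 * X 3] := by
  set f : MvPolynomial (Fin 4) k := X 0 * X 3 - X 1 * X 2 with hf
  set g : MvPolynomial (Fin 4) k := X 0 * X 2 ^ 2 - X 1 ^ 2 * X 3 with hg
  have hfne : f ≠ 0 := by
    intro h0
    have := congrArg (eval (![1, 0, 0, 1] : Fin 4 → k)) h0
    simp [hf] at this
  constructor
  · rw [RingTheory.Sequence.isWeaklyRegular_cons_iff,
      RingTheory.Sequence.isWeaklyRegular_singleton_iff]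
    constructor
    · intro a b hab
      exact mul_left_cancel₀ hfne (by simpa [smul_eq_mul] using hab)
    · intro a b hab
      obtain ⟨x, rfl⟩ := Submodule.Quotient.mk_surjective _ a
      obtain ⟨y, rfl⟩ := Submodule.Quotient.mk_surjective _ b
      dsimp only at hab
      rw [← Submodule.Quotient.mk_smul, ← Submodule.Quotient.mk_smul,
        Submodule.Quotient.eq] at hab
      rw [smul_top_f] at hab
      rw [Submodule.Quotient.eq, smul_top_f]
      have hmem : g * (x - y) ∈ Ideal.span {f} := by
        have : g * (x - y) = g • x - g • y := by
          simp [smul_eq_mul]; ring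
        rw [this]
        exact hab
      exact g_regular_mod_f hmem
  · intro htop
    have hle : Ideal.ofList [f, g] • (⊤ : Submodule (MvPolynomial (Fin 4) k)
        (MvPolynomial (Fin 4) k)) ≤ Ideal.ofList [f, g] := by
      rw [smul_eq_mul, Ideal.mul_top]
    have h1 : (1 : MvPolynomial (Fin 4) k) ∈ Ideal.ofList [f, g] :=
      hle (htop ▸ Submodule.mem_top)
    have hker : Ideal.ofList [f, g] ≤ RingHom.ker (constantCoeff : MvPolynomial (Fin 4) k →+* k) := by
      rw [Ideal.span_le]
      intro x hx
      simp only [Set.mem_setOf_eq, List.mem_cons, List.mem_singleton] at hx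
      rcases hx with rfl | hx
      · simp [RingHom.mem_ker, hf]
      · rcases hx with rfl | hx
        · simp [RingHom.mem_ker, hg]
        · simp at hx
    have := hker h1
    rw [RingHom.mem_ker, map_one] at this
    exact one_ne_zero this
end SkewAux

open SkewAux in
/-- For `R = k[x₀,x₁,x₂,x₃]` over an algebraically closed field `k`, with
`I = (x₀,x₁) ∩ (x₂,x₃)` (two skew lines) and
`J = (x₀x₃ − x₁x₂, x₁³ − x₀²x₂, x₀x₂² − x₁²x₃, x₂³ − x₁x₃²)` (twisted quartic),
one has `I ∩ J = (x₀x₃ − x₁x₂, x₀x₂² − x₁²x₃)`, a complete intersection generated by a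
regular sequence of length `2`. -/
theorem skew_lines_inter_twisted_quartic (k : Type) [Field k] [IsAlgClosed k]
    (I J : Ideal (MvPolynomial (Fin 4) k))
    (hI : I = Ideal.span {X 0, X 1} ⊓ Ideal.span {X 2, X 3})
    (hJ : J = Ideal.span
      { X 0 * X 3 - X 1 * X 2,
        (X 1 : MvPolynomial (Fin 4) k) ^ 3 - (X 0) ^ 2 * X 2,
        X 0 * (X 2) ^ 2 - (X 1) ^ 2 * X 3,
        (X 2) ^ 3 - X 1 * (X 3) ^ 2 }) :
    I ⊓ J = Ideal.span {X 0 * X 3 - X 1 * X 2, X 0 * (X 2) ^ 2 - (X 1) ^ 2 * X 3} ∧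
      RingTheory.Sequence.IsRegular (R := MvPolynomial (Fin 4) k) (MvPolynomial (Fin 4) k)
        [X 0 * X 3 - X 1 * X 2, X 0 * (X 2) ^ 2 - (X 1) ^ 2 * X 3] := by
  set R := MvPolynomial (Fin 4) k
  set f : R := X 0 * X 3 - X 1 * X 2 with hf
  set g : R := X 0 * X 2 ^ 2 - X 1 ^ 2 * X 3 with hg
  set q1 : R := X 1 ^ 3 - X 0 ^ 2 * X 2 with hq1
  set q2 : R := X 2 ^ 3 - X 1 * X 3 ^ 2 with hq2
  have hKI : Ideal.span {f, g} ≤ I := by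
    rw [hI, Ideal.span_le]
    rintro x (rfl | hx)
    · refine Ideal.mem_inf.mpr ⟨Ideal.mem_span_pair.mpr ⟨X 3, -(X 2), by ring⟩,
        Ideal.mem_span_pair.mpr ⟨-(X 1), X 0, by ring⟩⟩
    · rw [Set.mem_singleton_iff.mp hx]
      refine Ideal.mem_inf.mpr ⟨Ideal.mem_span_pair.mpr ⟨X 2 ^ 2, -(X 1 * X 3), by ring⟩,
        Ideal.mem_span_pair.mpr ⟨X 0 * X 2, -(X 1 ^ 2), by ring⟩⟩
  have hKJ : Ideal.span {f, g} ≤ J := by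
    rw [hJ, Ideal.span_le]
    rintro x (rfl | hx)
    · exact Ideal.subset_span (by left; rfl)
    · rw [Set.mem_singleton_iff.mp hx]
      exact Ideal.subset_span (by right; right; left; rfl)
  -- membership lemmas for products with span{X2,X3} and span{X0,X1}
  have hmulq1 : ∀ u ∈ Ideal.span ({X 2, X 3} : Set R), u * q1 ∈ Ideal.span {f, g} := by
    intro u hu
    obtain ⟨u2, u3, hu⟩ := Ideal.mem_span_pair.mp hu
    refine Ideal.mem_span_pair.mpr ⟨-(u2 * X 1 ^ 2) - u3 * X 0 * X 2,
      -(u2 * X 0) - u3 * X 1, ?_⟩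
    rw [hf, hg, hq1]
    linear_combination (X 1 ^ 3 - X 0 ^ 2 * X 2) * hu
  have hmulq2 : ∀ u ∈ Ideal.span ({X 0, X 1} : Set R), u * q2 ∈ Ideal.span {f, g} := by
    intro u hu
    obtain ⟨u0, u1, hu⟩ := Ideal.mem_span_pair.mp hu
    refine Ideal.mem_span_pair.mpr ⟨-(u0 * X 1 * X 3) - u1 * X 2 ^ 2,
      u0 * X 2 + u1 * X 3, ?_⟩
    rw [hf, hg, hq2]
    linear_combination (X 2 ^ 3 - X 1 * X 3 ^ 2) * hu
  set ν23 : Fin 4 → R := ![X 0, X 1, 0, 0] with hν23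
  set ν01 : Fin 4 → R := ![0, 0, X 2, X 3] with hν01
  have hgen23 : ∀ i, X i - ν23 i ∈ Ideal.span ({X 2, X 3} : Set R) := by
    intro i; fin_cases i <;> simp [hν23]
    · exact Ideal.subset_span (by left; rfl)
    · exact Ideal.subset_span (by right; rfl)
  have hgen01 : ∀ i, X i - ν01 i ∈ Ideal.span ({X 0, X 1} : Set R) := by
    intro i; fin_cases i <;> simp [hν01]
    · exact Ideal.subset_span (by left; rfl)
    · exact Ideal.subset_span (by right; rfl)
  have hker23 : ∀ x ∈ ({X 2, X 3} : Set R), aeval ν23 x = 0 := by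
    rintro x (rfl | hx)
    · simp [hν23]
    · rw [Set.mem_singleton_iff.mp hx]; simp [hν23]
  have hker01 : ∀ x ∈ ({X 0, X 1} : Set R), aeval ν01 x = 0 := by
    rintro x (rfl | hx)
    · simp [hν01]
    · rw [Set.mem_singleton_iff.mp hx]; simp [hν01]
  constructor
  · apply le_antisymm
    · intro p hp
      obtain ⟨hpI, hpJ⟩ := Ideal.mem_inf.mp hp
      rw [hJ] at hpJ
      obtain ⟨a, z1, hz1, hp1⟩ := Ideal.mem_span_insert.mp hpJ
      obtain ⟨b, z2, hz2, hz1e⟩ := Ideal.mem_span_insert.mp hz1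
      obtain ⟨c, z3, hz3, hz2e⟩ := Ideal.mem_span_insert.mp hz2
      obtain ⟨d, hz3e⟩ := Ideal.mem_span_singleton'.mp hz3
      have hpe : p = a * f + b * q1 + c * g + d * q2 := by
        rw [hp1, hz1e, hz2e, ← hz3e]; ring
      set b0 : R := aeval ν23 b with hb0
      set d0 : R := aeval ν01 d with hd0
      set s : R := b0 * q1 + d0 * q2 with hs
      have hps : p - s ∈ Ideal.span {f, g} := by
        have h1 : (b - b0) * q1 ∈ Ideal.span {f, g} :=
          hmulq1 _ (sub_aeval_mem ν23 _ hgen23 b)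
        have h2 : (d - d0) * q2 ∈ Ideal.span {f, g} :=
          hmulq2 _ (sub_aeval_mem ν01 _ hgen01 d)
        have h3 : a * f + c * g ∈ Ideal.span {f, g} :=
          Ideal.add_mem _ (Ideal.mul_mem_left _ _ (Ideal.subset_span (by left; rfl)))
            (Ideal.mul_mem_left _ _ (Ideal.subset_span (by right; rfl)))
        have : p - s = (a * f + c * g) + ((b - b0) * q1 + (d - d0) * q2) := by
          rw [hpe, hs]; ring
        rw [this]
        exact Ideal.add_mem _ h3 (Ideal.add_mem _ h1 h2)
      have hsI : s ∈ I := by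
        have : s = p - (p - s) := by ring
        rw [this]
        exact Ideal.sub_mem _ hpI (hKI hps)
      -- s ∈ span{X2,X3} gives b0 = 0
      have hb00 : b0 = 0 := by
        have hsmem : s ∈ Ideal.span ({X 2, X 3} : Set R) := by
          rw [hI] at hsI; exact hsI.2
        have h0 := aeval_eq_zero_of_mem ν23 _ hker23 hsmem
        rw [hs, map_add, map_mul, map_mul] at h0
        have hb0fix : aeval ν23 b0 = b0 := aeval_aeval ν23 _ hgen23 hker23 b
        have hru1 : aeval ν23 q1 = X 1 ^ 3 := by
          rw [hq1]; simp [hν23]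
        have hru2 : aeval ν23 q2 = 0 := by
          rw [hq2]; simp [hν23]
        rw [hb0fix, hru1, hru2, mul_zero, add_zero] at h0
        rcases mul_eq_zero.mp h0 with h | h
        · exact h
        · exact absurd h (pow_ne_zero _ (X_ne_zero _))
      have hd00 : d0 = 0 := by
        have hsmem : s ∈ Ideal.span ({X 0, X 1} : Set R) := by
          rw [hI] at hsI; exact hsI.1
        have h0 := aeval_eq_zero_of_mem ν01 _ hker01 hsmem
        rw [hs, map_add, map_mul, map_mul] at h0
        have hd0fix : aeval ν01 d0 = d0 := aeval_aeval ν01 _ hgen01 hker01 d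
        have hru1 : aeval ν01 q1 = 0 := by
          rw [hq1]; simp [hν01]
        have hru2 : aeval ν01 q2 = X 2 ^ 3 := by
          rw [hq2]; simp [hν01]
        rw [hd0fix, hru1, hru2, mul_zero, zero_add] at h0
        rcases mul_eq_zero.mp h0 with h | h
        · exact h
        · exact absurd h (pow_ne_zero _ (X_ne_zero _))
      have : s = 0 := by rw [hs, hb00, hd00]; ring
      rw [this, sub_zero] at hps
      exact hps
    · exact le_inf hKI hKJ
  · exact reg_seq
end
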